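/- For every fixed real parameter φ > 0, the function h defined on (0, ∞) by h(t) = (√(φ²t² + 14φt + 1) − φt + 1)/(2t) is strictly convex on (0, ∞), and it maps the PCD mean back to η: for every η > 0, h((η+4φ)/(η(φ+η))) = η. -/

import Mathlib

open Set Real

noncomputable def mFun (φ : ℝ) : ℝ → ℝ := fun η => (η + 4 * φ) / (η * (φ + η))
noncomputable def hFun (φ : ℝ) : ℝ → ℝ := fun t =>
  (Real.sqrt (φ ^ 2 * t ^ 2 + 14 * φ * t + 1) - φ * t + 1) / (2 * t)

lemma hFun_pos {φ : ℝ} (hφ : 0 < φ) {t : ℝ} (ht : 0 < t) : 0 < hFun φ t := by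
  have hP : (0:ℝ) ≤ φ ^ 2 * t ^ 2 + 14 * φ * t + 1 := by positivity
  have hs0 : 0 ≤ Real.sqrt (φ ^ 2 * t ^ 2 + 14 * φ * t + 1) := Real.sqrt_nonneg _
  have hs2 : Real.sqrt (φ ^ 2 * t ^ 2 + 14 * φ * t + 1) ^ 2
      = φ ^ 2 * t ^ 2 + 14 * φ * t + 1 := Real.sq_sqrt hP
  have : 0 < Real.sqrt (φ ^ 2 * t ^ 2 + 14 * φ * t + 1) - φ * t + 1 := by
    nlinarith [mul_pos hφ ht]
  exact div_pos this (by positivity)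

lemma m_hFun {φ : ℝ} (hφ : 0 < φ) {t : ℝ} (ht : 0 < t) : mFun φ (hFun φ t) = t := by
  have hP : (0:ℝ) ≤ φ ^ 2 * t ^ 2 + 14 * φ * t + 1 := by positivity
  set s := Real.sqrt (φ ^ 2 * t ^ 2 + 14 * φ * t + 1) with hs
  have hs0 : 0 ≤ s := Real.sqrt_nonneg _
  have hs2 : s ^ 2 = φ ^ 2 * t ^ 2 + 14 * φ * t + 1 := Real.sq_sqrt hP
  have hy : 0 < hFun φ t := hFun_pos hφ ht
  have hyφ : 0 < φ + hFun φ t := by linarith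
  unfold mFun
  rw [div_eq_iff (by positivity)]
  unfold hFun
  rw [← hs]
  field_simp
  ring_nf
  nlinarith [hs2, hs0]

lemma m_hasDeriv {φ x : ℝ} (hφ : 0 < φ) (hx : 0 < x) :
    HasDerivAt (mFun φ) (-4 / x ^ 2 + 3 / (φ + x) ^ 2) x := by
  have hden : x * (φ + x) ≠ 0 := by positivity
  have h1 : HasDerivAt (fun η : ℝ => η + 4 * φ) 1 x := by
    simpa using (hasDerivAt_id x).add_const (4 * φ)
  have h2 : HasDerivAt (fun η : ℝ => η * (φ + η)) (1 * (φ + x) + x * 1) x := by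
    rw [show (1:ℝ) * (φ + x) + x * 1 = 1 * (φ + x) + x * (0 + 1) by ring]
    exact (hasDerivAt_id' x).mul ((hasDerivAt_const x φ).add (hasDerivAt_id' x))
  have : HasDerivAt (mFun φ)
      ((1 * (x * (φ + x)) - (x + 4 * φ) * (1 * (φ + x) + x * 1)) / (x * (φ + x)) ^ 2) x :=
    h1.fun_div h2 hden
  convert this using 1
  have hx' : x ≠ 0 := ne_of_gt hx
  have hφx : φ + x ≠ 0 := by positivity
  field_simp
  ring

lemma m_deriv_strictMono {φ : ℝ} (hφ : 0 < φ) :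
    StrictMonoOn (deriv (mFun φ)) (Ioi (0:ℝ)) := by
  intro x hx y hy hxy
  simp only [mem_Ioi] at hx hy
  rw [(m_hasDeriv hφ hx).deriv, (m_hasDeriv hφ hy).deriv]
  have k1 : 3 / ((φ + x) * (φ + y) ^ 2) < 4 / (x * y ^ 2) := by
    rw [div_lt_div_iff₀ (by positivity) (by positivity)]
    nlinarith [mul_pos hx (mul_pos hy hy), sq_nonneg y, mul_pos hφ (mul_pos hy hy),
      mul_pos hx (mul_pos hφ hy), mul_pos hx (mul_pos hφ hφ)]
  have k2 : 3 / ((φ + x) ^ 2 * (φ + y)) < 4 / (x ^ 2 * y) := by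
    rw [div_lt_div_iff₀ (by positivity) (by positivity)]
    nlinarith [mul_pos (mul_pos hx hx) hy, mul_pos hφ (mul_pos hx hx),
      mul_pos (mul_pos hφ hx) hy, mul_pos (mul_pos hφ hφ) hy]
  have A : 3 / (φ + x) ^ 2 - 3 / (φ + y) ^ 2
      = (y - x) * (3 / ((φ + x) * (φ + y) ^ 2)) + (y - x) * (3 / ((φ + x) ^ 2 * (φ + y))) := by
    have hφx : (φ + x) ≠ 0 := by positivity
    have hφy : (φ + y) ≠ 0 := by positivity
    field_simp
    ring
  have B : 4 / x ^ 2 - 4 / y ^ 2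
      = (y - x) * (4 / (x * y ^ 2)) + (y - x) * (4 / (x ^ 2 * y)) := by
    have hx' : x ≠ 0 := ne_of_gt hx
    have hy' : y ≠ 0 := ne_of_gt hy
    field_simp
    ring
  have hyx : 0 < y - x := by linarith
  have e1 : (-4:ℝ) / x ^ 2 = -(4 / x ^ 2) := by ring
  have e2 : (-4:ℝ) / y ^ 2 = -(4 / y ^ 2) := by ring
  rw [e1, e2]
  linarith [mul_lt_mul_of_pos_left k1 hyx, mul_lt_mul_of_pos_left k2 hyx]

lemma m_cont {φ : ℝ} (hφ : 0 < φ) : ContinuousOn (mFun φ) (Ioi (0:ℝ)) := by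
  apply ContinuousOn.div (by fun_prop) (by fun_prop)
  intro x hx
  have : 0 < x := hx
  positivity

lemma m_strictConvex {φ : ℝ} (hφ : 0 < φ) : StrictConvexOn ℝ (Ioi (0:ℝ)) (mFun φ) := by
  apply StrictMonoOn.strictConvexOn_of_deriv (convex_Ioi 0) (m_cont hφ)
  rw [interior_Ioi]
  exact m_deriv_strictMono hφ

lemma m_strictAnti {φ : ℝ} (hφ : 0 < φ) : StrictAntiOn (mFun φ) (Ioi (0:ℝ)) := by
  intro x hx y hy hxy
  simp only [mem_Ioi] at hx hy
  unfold mFun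
  rw [div_lt_div_iff₀ (by positivity) (by positivity)]
  nlinarith [mul_pos hx hy, mul_pos (mul_pos hx hy) hy, mul_pos hφ (mul_pos hx hy),
    mul_pos (mul_pos hφ hφ) hy, mul_pos (mul_pos hφ hφ) hx, mul_pos hφ hy, mul_pos hφ hx]

lemma h_strictConvex {φ : ℝ} (hφ : 0 < φ) : StrictConvexOn ℝ (Ioi (0:ℝ)) (hFun φ) := by
  refine ⟨convex_Ioi 0, ?_⟩
  intro x hx y hy hxy a b ha hb hab
  simp only [smul_eq_mul, mem_Ioi] at *
  have ht : 0 < a * x + b * y := by positivity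
  have hu : 0 < hFun φ x := hFun_pos hφ hx
  have hv : 0 < hFun φ y := hFun_pos hφ hy
  have hw : 0 < hFun φ (a * x + b * y) := hFun_pos hφ ht
  have hmu : mFun φ (hFun φ x) = x := m_hFun hφ hx
  have hmv : mFun φ (hFun φ y) = y := m_hFun hφ hy
  have hmw : mFun φ (hFun φ (a * x + b * y)) = a * x + b * y := m_hFun hφ ht
  have huv : hFun φ x ≠ hFun φ y := fun h => hxy (by rw [← hmu, ← hmv, h])
  have hcomb : 0 < a * hFun φ x + b * hFun φ y := by positivity
  have key : mFun φ (a * hFun φ x + b * hFun φ y) < a * x + b * y := by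
    have := (m_strictConvex hφ).2 (mem_Ioi.2 hu) (mem_Ioi.2 hv) huv ha hb hab
    simp only [smul_eq_mul] at this
    rw [hmu, hmv] at this
    exact this
  by_contra hle
  push_neg at hle
  rcases eq_or_lt_of_le hle with heq | hlt
  · rw [heq, hmw] at key
    exact lt_irrefl _ key
  · have := m_strictAnti hφ (mem_Ioi.2 hcomb) (mem_Ioi.2 hw) hlt
    rw [hmw] at this
    linarith

/-- For fixed `φ > 0`, the function `h(t) = (√(φ²t² + 14φt + 1) − φt + 1)/(2t)` is
strictly convex on `(0, ∞)` and maps the PCD mean back to `η`. -/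
theorem mom_estimator_strictly_convex_and_inverts_mean (φ : ℝ) (hφ : 0 < φ) :
    StrictConvexOn ℝ (Set.Ioi (0 : ℝ))
      (fun t : ℝ => (Real.sqrt (φ ^ 2 * t ^ 2 + 14 * φ * t + 1) - φ * t + 1) / (2 * t))
    ∧ ∀ η : ℝ, 0 < η →
      (Real.sqrt (φ ^ 2 * ((η + 4 * φ) / (η * (φ + η))) ^ 2
            + 14 * φ * ((η + 4 * φ) / (η * (φ + η))) + 1)
          - φ * ((η + 4 * φ) / (η * (φ + η))) + 1)
        / (2 * ((η + 4 * φ) / (η * (φ + η)))) = η := by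
  constructor
  · exact h_strictConvex hφ
  · intro η hη
    have ht : 0 < (η + 4 * φ) / (η * (φ + η)) := by positivity
    have hmt : mFun φ η = (η + 4 * φ) / (η * (φ + η)) := rfl
    show hFun φ (mFun φ η) = η
    apply (m_strictAnti hφ).injOn
    · exact mem_Ioi.2 (by rw [hmt]; exact hFun_pos hφ ht)
    · exact mem_Ioi.2 hη
    · rw [hmt] at *
      exact m_hFun hφ ht
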